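/- The generating function of the numbers pnw(n,6) satisfies the formal power series identity (1 − x⁵)·(1 − x³)·(1 − x²)·(1 − x)³ · ∑_{n≥1} pnw(n,6)·xⁿ = x⁶·(1 + x + x² + x³) (in the ring of formal power series over the integers). -/

import Mathlib

/-- A binary word (list of Booleans, `true` = 1) is prefix normal if no substring
has more 1s than the prefix of the same length. -/
def IsPrefixNormal (w : List Bool) : Prop :=
  ∀ u : List Bool, u <:+: w → u.count true ≤ (w.take u.length).count true

/-- The number of prefix normal words of length `n` and density `d` (number of 1s). -/
noncomputable def pnwd (n d : ℕ) : ℕ :=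
  Nat.card {w : List Bool // w.length = n ∧ w.count true = d ∧ IsPrefixNormal w}

set_option maxHeartbeats 1000000

open PowerSeries Finset

/-! ### Counting solutions of linear diophantine equations -/

/-- the solutions `v` of `dot L v = r` in naturals -/
def solS : List ℕ → ℕ → Finset (List ℕ)
  | [], r => if r = 0 then {[]} else ∅
  | k :: L, r => (Finset.range (r / k + 1)).biUnion (fun j => (solS L (r - k * j)).image (j :: ·))

def dot : List ℕ → List ℕ → ℕ
  | k :: L, j :: v => k * j + dot L v
  | _, _ => 0

lemma dot_cons (k j : ℕ) (L v : List ℕ) : dot (k :: L) (j :: v) = k * j + dot L v := rfl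

lemma mem_solS {L : List ℕ} (hL : ∀ k ∈ L, 0 < k) {v : List ℕ} {r : ℕ} :
    v ∈ solS L r ↔ v.length = L.length ∧ dot L v = r := by
  induction L generalizing r v with
  | nil =>
    simp only [solS]
    split
    · rename_i hr
      simp only [Finset.mem_singleton]
      constructor
      · rintro rfl
        exact ⟨rfl, by simp [dot]; omega⟩
      · rintro ⟨h1, h2⟩
        exact List.length_eq_zero_iff.mp h1
    · rename_i hr
      simp only [Finset.notMem_empty, false_iff]
      rintro ⟨h1, h2⟩
      have : v = [] := List.length_eq_zero_iff.mp h1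
      subst this
      have : dot [] ([] : List ℕ) = 0 := rfl
      omega
  | cons k L ih =>
    have hk : 0 < k := hL k (by simp)
    have hL' : ∀ x ∈ L, 0 < x := fun x hx => hL x (by simp [hx])
    simp only [solS, Finset.mem_biUnion, Finset.mem_range, Finset.mem_image]
    constructor
    · rintro ⟨j, hj, u, hu, rfl⟩
      obtain ⟨h1, h2⟩ := (ih hL').mp hu
      have hjr : k * j ≤ r := by
        calc k * j ≤ k * (r / k) := Nat.mul_le_mul_left k (by omega)
        _ ≤ r := Nat.mul_div_le r k
      constructor
      · simp [h1]
      · simp only [dot]; omega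
    · rintro ⟨h1, h2⟩
      cases v with
      | nil => simp at h1
      | cons j u =>
        simp only [List.length_cons, Nat.add_right_cancel_iff] at h1
        simp only [dot] at h2
        refine ⟨j, ?_, u, (ih hL').mpr ⟨h1, by omega⟩, rfl⟩
        have h3 : k * j ≤ r := by omega
        have := (Nat.le_div_iff_mul_le hk).mpr (by rw [Nat.mul_comm]; omega : j * k ≤ r)
        omega

def bump : List ℕ → List ℕ
  | j :: u => (j+1) :: u
  | [] => []

lemma solS_card_rec {k : ℕ} {L : List ℕ} (hk : 0 < k) (hL : ∀ x ∈ L, 0 < x) (r : ℕ) :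
    (solS (k :: L) r).card =
      (solS L r).card + if k ≤ r then (solS (k :: L) (r - k)).card else 0 := by
  have hkL : ∀ x ∈ k :: L, 0 < x := by
    intro x hx; rcases List.mem_cons.mp hx with rfl | h; exact hk; exact hL x h
  by_cases hkr : k ≤ r
  · rw [if_pos hkr]
    have hset : solS (k :: L) r =
        (solS L r).image (0 :: ·) ∪ (solS (k :: L) (r - k)).image bump := by
      ext v
      simp only [Finset.mem_union, Finset.mem_image, mem_solS hkL, mem_solS hL]
      constructor
      · rintro ⟨h1, h2⟩
        cases v with
        | nil => simp at h1
        | cons j u =>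
          simp only [List.length_cons, Nat.add_right_cancel_iff] at h1
          rw [dot_cons] at h2
          cases j with
          | zero => exact Or.inl ⟨u, ⟨h1, by omega⟩, rfl⟩
          | succ j' =>
            refine Or.inr ⟨j' :: u, ⟨by simp [h1], ?_⟩, rfl⟩
            rw [dot_cons]
            rw [Nat.mul_succ] at h2
            omega
      · rintro (⟨u, ⟨h1, h2⟩, rfl⟩ | ⟨u, hu, rfl⟩)
        · exact ⟨by simp [h1], by rw [dot_cons]; omega⟩
        · obtain ⟨h1, h2⟩ := hu
          cases u with
          | nil => simp at h1
          | cons j u' =>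
            simp only [List.length_cons, Nat.add_right_cancel_iff] at h1
            rw [dot_cons] at h2
            refine ⟨by simp [bump, h1], ?_⟩
            show dot (k :: L) ((j+1) :: u') = r
            rw [dot_cons, Nat.mul_succ]
            omega
    rw [hset, Finset.card_union_of_disjoint, Finset.card_image_of_injective _
        (fun a b h => by simpa using h),
      Finset.card_image_of_injOn]
    · intro a ha b hb hab
      obtain ⟨ha1, _⟩ := (mem_solS hkL).mp ha
      obtain ⟨hb1, _⟩ := (mem_solS hkL).mp hb
      cases a with
      | nil => simp at ha1
      | cons x a' =>
        cases b with
        | nil => simp at hb1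
        | cons y b' => simpa [bump] using hab
    · rw [Finset.disjoint_left]
      intro v hv1 hv2
      simp only [Finset.mem_image] at hv1 hv2
      obtain ⟨u, _, rfl⟩ := hv1
      obtain ⟨u', hu', he⟩ := hv2
      obtain ⟨h1, _⟩ := (mem_solS hkL).mp hu'
      cases u' with
      | nil => simp at h1
      | cons y b' => simp [bump] at he
  · rw [if_neg hkr]
    have hset : solS (k :: L) r = (solS L r).image (0 :: ·) := by
      ext v
      simp only [Finset.mem_image, mem_solS hkL, mem_solS hL]
      constructor
      · rintro ⟨h1, h2⟩
        cases v with
        | nil => simp at h1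
        | cons j u =>
          simp only [List.length_cons, Nat.add_right_cancel_iff] at h1
          rw [dot_cons] at h2
          cases j with
          | zero => exact ⟨u, ⟨h1, by omega⟩, rfl⟩
          | succ j' => rw [Nat.mul_succ] at h2; omega
      · rintro ⟨u, ⟨h1, h2⟩, rfl⟩
        exact ⟨by simp [h1], by rw [dot_cons]; omega⟩
    rw [hset, Finset.card_image_of_injective _
      (fun a b h => by simpa using h), Nat.add_zero]

noncomputable def Phi (L : List ℕ) : PowerSeries ℤ :=
  PowerSeries.mk fun r => ((solS L r).card : ℤ)

lemma peel {k : ℕ} {L : List ℕ} (hk : 0 < k) (hL : ∀ x ∈ L, 0 < x) :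
    (1 - (X : PowerSeries ℤ) ^ k) * Phi (k :: L) = Phi L := by
  ext n
  rw [sub_mul, one_mul, map_sub]
  rw [PowerSeries.coeff_X_pow_mul']
  simp only [Phi, PowerSeries.coeff_mk]
  have := solS_card_rec hk hL n
  split_ifs with h
  · rw [this, if_pos h]; push_cast; ring
  · rw [this, if_neg h]; push_cast; ring

lemma Phi_nil : Phi [] = 1 := by
  ext n
  simp only [Phi, PowerSeries.coeff_mk, solS, PowerSeries.coeff_one]
  split_ifs <;> simp

/-! ### Prefix counts and prefix normality -/

def ct (w : List Bool) (ℓ : ℕ) : ℕ := (w.take ℓ).count true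

lemma ct_mono (w : List Bool) {a b : ℕ} (h : a ≤ b) : ct w a ≤ ct w b := by
  have h2 : w.take a = (w.take b).take a := by rw [List.take_take, Nat.min_eq_left h]
  rw [ct, h2]
  exact (List.take_sublist _ _).count_le true

lemma pn_iff_subadd (w : List Bool) :
    IsPrefixNormal w ↔ ∀ i ℓ, ct w (i + ℓ) ≤ ct w i + ct w ℓ := by
  constructor
  · intro h i ℓ
    set u := (w.drop i).take ℓ with hu
    have hinf : u <:+: w := by
      refine ⟨w.take i, w.drop (i + ℓ), ?_⟩
      rw [← List.take_add, List.take_append_drop]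
    have key : ct w (i + ℓ) = ct w i + u.count true := by
      rw [ct, List.take_add, List.count_append]; rfl
    have hlen : u.length ≤ ℓ := by
      rw [hu, List.length_take]
      omega
    have h1 : u.count true ≤ ct w u.length := h u hinf
    have h2 : ct w u.length ≤ ct w ℓ := ct_mono w hlen
    omega
  · rintro h u ⟨s, t, rfl⟩
    have h1 : ct (s ++ u ++ t) s.length = s.count true := by
      rw [ct, List.append_assoc, List.take_left]
    have h2 : ct (s ++ u ++ t) (s.length + u.length) = s.count true + u.count true := by
      rw [ct, List.append_assoc, List.take_add, List.take_left, List.count_append]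
      congr 1
      rw [List.drop_left, List.take_left]
    have h3 := h s.length u.length
    rw [h1, h2] at h3
    show u.count true ≤ ct (s ++ u ++ t) u.length
    omega

/-! ### Structured words -/

def w6 : List ℕ → List Bool
  | [] => []
  | c :: cs => true :: (List.replicate c false ++ w6 cs)

lemma w6_length (cs : List ℕ) : (w6 cs).length = cs.length + cs.sum := by
  induction cs with
  | nil => rfl
  | cons c cs ih => simp [w6, ih]; omega

lemma w6_count (cs : List ℕ) : (w6 cs).count true = cs.length := by
  induction cs with
  | nil => rfl
  | cons c cs ih =>
    simp [w6, List.count_append, ih, List.count_replicate]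

def ctf : List ℕ → ℕ → ℕ
  | [], _ => 0
  | c :: cs, x => if x = 0 then 0 else 1 + ctf cs (x - 1 - c)

lemma count_true_cons_false (v : List Bool) : (false :: v).count true = v.count true := by
  simp [List.count_cons]

lemma count_true_cons_true (v : List Bool) : (true :: v).count true = v.count true + 1 := by
  simp [List.count_cons]

lemma ct_replicate_append (c : ℕ) (v : List Bool) (x : ℕ) :
    ct (List.replicate c false ++ v) x = ct v (x - c) := by
  induction c generalizing x with
  | zero => simp [ct]
  | succ c ih =>
    cases x with
    | zero => simp [ct]
    | succ x =>
      have e : List.replicate (c+1) false ++ v = false :: (List.replicate c false ++ v) := rfl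
      rw [e, ct, List.take_succ_cons, count_true_cons_false]
      have h1 := ih x
      simp only [ct] at h1 ⊢
      rw [h1]
      have e2 : x + 1 - (c + 1) = x - c := by omega
      rw [e2]

lemma ct_w6 (cs : List ℕ) (x : ℕ) : ct (w6 cs) x = ctf cs x := by
  induction cs generalizing x with
  | nil => simp [w6, ctf, ct]
  | cons c cs ih =>
    cases x with
    | zero => simp [ct, ctf]
    | succ x =>
      rw [ctf]
      simp only [Nat.succ_ne_zero, if_false]
      rw [w6, ct, List.take_succ_cons, count_true_cons_true]
      have h1 := ct_replicate_append c (w6 cs) x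
      have ih' := ih (x - c)
      simp only [ct] at h1 ih' ⊢
      rw [h1, ih']
      have e : x + 1 - 1 - c = x - c := by omega
      rw [e]
      omega

def lf (w : List Bool) : ℕ := (w.takeWhile (· == false)).length

lemma lf_false_cons (v : List Bool) : lf (false :: v) = lf v + 1 := by
  simp [lf, List.takeWhile_cons]

lemma lf_true_cons (v : List Bool) : lf (true :: v) = 0 := by
  simp [lf, List.takeWhile_cons]

lemma lf_replicate_append (c : ℕ) (v : List Bool) :
    lf (List.replicate c false ++ v) = c + lf v := by
  induction c with
  | zero => simp
  | succ c ih =>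
    have e : List.replicate (c+1) false ++ v = false :: (List.replicate c false ++ v) := rfl
    rw [e, lf_false_cons, ih]
    omega

lemma w6_injective {cs cs' : List ℕ} (hlen : cs.length = cs'.length)
    (h : w6 cs = w6 cs') : cs = cs' := by
  induction cs generalizing cs' with
  | nil =>
    cases cs' with
    | nil => rfl
    | cons c' cs' => simp at hlen
  | cons c cs ih =>
    cases cs' with
    | nil => simp at hlen
    | cons c' cs' =>
      simp only [List.length_cons, Nat.add_right_cancel_iff] at hlen
      rw [w6, w6, List.cons.injEq] at h
      obtain ⟨-, h⟩ := h
      have hc : c = c' := by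
        have h2 := congrArg lf h
        rw [lf_replicate_append, lf_replicate_append] at h2
        cases cs with
        | nil =>
          cases cs' with
          | nil => simpa using h2
          | cons => simp at hlen
        | cons a as =>
          cases cs' with
          | nil => simp at hlen
          | cons a' as' =>
            rw [w6, w6, lf_true_cons, lf_true_cons] at h2
            omega
      subst hc
      have h3 := List.append_cancel_left h
      exact congrArg₂ _ rfl (ih hlen h3)

lemma w6_structure (w : List Bool) :
    ∃ z cs, w = List.replicate z false ++ w6 cs := by
  induction w with
  | nil => exact ⟨0, [], rfl⟩
  | cons b w ih =>
    obtain ⟨z, cs, rfl⟩ := ih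
    cases b with
    | false => exact ⟨z + 1, cs, rfl⟩
    | true => exact ⟨0, z :: cs, by simp [w6]⟩

lemma count_replicate_w6 (z : ℕ) (cs : List ℕ) :
    (List.replicate z false ++ w6 cs).count true = cs.length := by
  simp [List.count_append, List.count_replicate, w6_count]

/-! ### Characterization of prefix normality for density-6 words -/

lemma ctf_closed (c1 c2 c3 c4 c5 c6 x : ℕ) :
    ctf [c1,c2,c3,c4,c5,c6] x =
      if 6 + c1 + c2 + c3 + c4 + c5 ≤ x then 6
      else if 5 + c1 + c2 + c3 + c4 ≤ x then 5
      else if 4 + c1 + c2 + c3 ≤ x then 4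
      else if 3 + c1 + c2 ≤ x then 3
      else if 2 + c1 ≤ x then 2
      else if 1 ≤ x then 1
      else 0 := by
  simp only [ctf]
  split_ifs <;> omega

lemma ctf_spec (c1 c2 c3 c4 c5 c6 x : ℕ) :
    (6 + c1 + c2 + c3 + c4 + c5 ≤ x ∧ ctf [c1,c2,c3,c4,c5,c6] x = 6) ∨
    (5 + c1 + c2 + c3 + c4 ≤ x ∧ x < 6 + c1 + c2 + c3 + c4 + c5 ∧ ctf [c1,c2,c3,c4,c5,c6] x = 5) ∨
    (4 + c1 + c2 + c3 ≤ x ∧ x < 5 + c1 + c2 + c3 + c4 ∧ ctf [c1,c2,c3,c4,c5,c6] x = 4) ∨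
    (3 + c1 + c2 ≤ x ∧ x < 4 + c1 + c2 + c3 ∧ ctf [c1,c2,c3,c4,c5,c6] x = 3) ∨
    (2 + c1 ≤ x ∧ x < 3 + c1 + c2 ∧ ctf [c1,c2,c3,c4,c5,c6] x = 2) ∨
    (1 ≤ x ∧ x < 2 + c1 ∧ ctf [c1,c2,c3,c4,c5,c6] x = 1) ∨
    (x = 0 ∧ ctf [c1,c2,c3,c4,c5,c6] x = 0) := by
  rw [ctf_closed]
  split_ifs <;> omega

lemma ctf_subadd_of_cond (c1 c2 c3 c4 c5 t : ℕ)
    (h1 : c1 ≤ c2) (h2 : c1 ≤ c3) (h3 : c1 ≤ c4) (h4 : c1 ≤ c5)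
    (h5 : c1 + c2 ≤ c3 + c4) (h6 : c1 + c2 ≤ c4 + c5) (i ℓ : ℕ) :
    ctf [c1,c2,c3,c4,c5,t] (i + ℓ) ≤ ctf [c1,c2,c3,c4,c5,t] i + ctf [c1,c2,c3,c4,c5,t] ℓ := by
  have hA := ctf_spec c1 c2 c3 c4 c5 t (i + ℓ)
  have hB := ctf_spec c1 c2 c3 c4 c5 t i
  have hC := ctf_spec c1 c2 c3 c4 c5 t ℓ
  omega

lemma cond_of_ctf_subadd (c1 c2 c3 c4 c5 t : ℕ)
    (h : ∀ i ℓ, ctf [c1,c2,c3,c4,c5,t] (i + ℓ) ≤ ctf [c1,c2,c3,c4,c5,t] i + ctf [c1,c2,c3,c4,c5,t] ℓ) :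
    c1 ≤ c2 ∧ c1 ≤ c3 ∧ c1 ≤ c4 ∧ c1 ≤ c5 ∧ c1 + c2 ≤ c3 + c4 ∧ c1 + c2 ≤ c4 + c5 := by
  refine ⟨?_, ?_, ?_, ?_, ?_, ?_⟩
  · have hh := h (1 + c1) (c2 + 2)
    have hA := ctf_spec c1 c2 c3 c4 c5 t ((1 + c1) + (c2 + 2))
    have hB := ctf_spec c1 c2 c3 c4 c5 t (1 + c1)
    have hC := ctf_spec c1 c2 c3 c4 c5 t (c2 + 2)
    omega
  · have hh := h (2 + c1 + c2) (c3 + 2)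
    have hA := ctf_spec c1 c2 c3 c4 c5 t ((2 + c1 + c2) + (c3 + 2))
    have hB := ctf_spec c1 c2 c3 c4 c5 t (2 + c1 + c2)
    have hC := ctf_spec c1 c2 c3 c4 c5 t (c3 + 2)
    omega
  · have hh := h (3 + c1 + c2 + c3) (c4 + 2)
    have hA := ctf_spec c1 c2 c3 c4 c5 t ((3 + c1 + c2 + c3) + (c4 + 2))
    have hB := ctf_spec c1 c2 c3 c4 c5 t (3 + c1 + c2 + c3)
    have hC := ctf_spec c1 c2 c3 c4 c5 t (c4 + 2)
    omega
  · have hh := h (4 + c1 + c2 + c3 + c4) (c5 + 2)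
    have hA := ctf_spec c1 c2 c3 c4 c5 t ((4 + c1 + c2 + c3 + c4) + (c5 + 2))
    have hB := ctf_spec c1 c2 c3 c4 c5 t (4 + c1 + c2 + c3 + c4)
    have hC := ctf_spec c1 c2 c3 c4 c5 t (c5 + 2)
    omega
  · have hh := h (2 + c1 + c2) (c3 + c4 + 3)
    have hA := ctf_spec c1 c2 c3 c4 c5 t ((2 + c1 + c2) + (c3 + c4 + 3))
    have hB := ctf_spec c1 c2 c3 c4 c5 t (2 + c1 + c2)
    have hC := ctf_spec c1 c2 c3 c4 c5 t (c3 + c4 + 3)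
    omega
  · have hh := h (3 + c1 + c2 + c3) (c4 + c5 + 3)
    have hA := ctf_spec c1 c2 c3 c4 c5 t ((3 + c1 + c2 + c3) + (c4 + c5 + 3))
    have hB := ctf_spec c1 c2 c3 c4 c5 t (3 + c1 + c2 + c3)
    have hC := ctf_spec c1 c2 c3 c4 c5 t (c4 + c5 + 3)
    omega

lemma pn_w6_iff (c1 c2 c3 c4 c5 t : ℕ) :
    IsPrefixNormal (w6 [c1,c2,c3,c4,c5,t]) ↔
      (c1 ≤ c2 ∧ c1 ≤ c3 ∧ c1 ≤ c4 ∧ c1 ≤ c5 ∧ c1 + c2 ≤ c3 + c4 ∧ c1 + c2 ≤ c4 + c5) := by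
  rw [pn_iff_subadd]
  constructor
  · intro h
    apply cond_of_ctf_subadd
    intro i ℓ
    have := h i ℓ
    rwa [ct_w6, ct_w6, ct_w6] at this
  · rintro ⟨h1, h2, h3, h4, h5, h6⟩ i ℓ
    rw [ct_w6, ct_w6, ct_w6]
    exact ctf_subadd_of_cond c1 c2 c3 c4 c5 t h1 h2 h3 h4 h5 h6 i ℓ

/-! ### The counting bijections -/

def CONDb : List ℕ → Bool
  | [c1,c2,c3,c4,c5,_] =>
      decide (c1 ≤ c2 ∧ c1 ≤ c3 ∧ c1 ≤ c4 ∧ c1 ≤ c5 ∧ c1 + c2 ≤ c3 + c4 ∧ c1 + c2 ≤ c4 + c5)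
  | _ => false

lemma list6 {cs : List ℕ} (h : cs.length = 6) :
    ∃ c1 c2 c3 c4 c5 c6, cs = [c1,c2,c3,c4,c5,c6] := by
  match cs, h with
  | [a,b,c,d,e,f], _ => exact ⟨a,b,c,d,e,f, rfl⟩

noncomputable def S (n : ℕ) : Finset (List ℕ) :=
  (solS [1,1,1,1,1,1] (n - 6)).filter (fun cs => CONDb cs = true)

lemma dot_ones (c1 c2 c3 c4 c5 c6 : ℕ) :
    dot [1,1,1,1,1,1] [c1,c2,c3,c4,c5,c6] = c1+c2+c3+c4+c5+c6 := by
  simp [dot]; ring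

lemma mem_S {n : ℕ} (hn : 6 ≤ n) {cs : List ℕ} :
    cs ∈ S n ↔ ∃ c1 c2 c3 c4 c5 c6, cs = [c1,c2,c3,c4,c5,c6] ∧
      c1+c2+c3+c4+c5+c6 = n - 6 ∧
      (c1 ≤ c2 ∧ c1 ≤ c3 ∧ c1 ≤ c4 ∧ c1 ≤ c5 ∧ c1 + c2 ≤ c3 + c4 ∧ c1 + c2 ≤ c4 + c5) := by
  rw [S, Finset.mem_filter, mem_solS (by intro k hk; fin_cases hk <;> norm_num)]
  constructor
  · rintro ⟨⟨hlen, hdot⟩, hcond⟩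
    obtain ⟨c1,c2,c3,c4,c5,c6, rfl⟩ := list6 hlen
    rw [dot_ones] at hdot
    refine ⟨c1,c2,c3,c4,c5,c6, rfl, hdot, ?_⟩
    simpa [CONDb] using hcond
  · rintro ⟨c1,c2,c3,c4,c5,c6, rfl, hdot, hcond⟩
    exact ⟨⟨rfl, by rw [dot_ones]; exact hdot⟩, by simpa [CONDb] using hcond⟩

lemma pnwd_eq_S (n : ℕ) (hn : 6 ≤ n) : pnwd n 6 = (S n).card := by
  rw [pnwd, ← Nat.card_eq_finsetCard]
  apply Nat.card_congr
  apply Equiv.symm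
  apply Equiv.ofBijective (f := fun cs : {cs // cs ∈ S n} =>
    (⟨w6 cs.1, by
      obtain ⟨c1,c2,c3,c4,c5,c6, he, hdot, hcond⟩ := (mem_S hn).mp cs.2
      refine ⟨?_, ?_, ?_⟩
      · rw [w6_length, he]; simp; omega
      · rw [w6_count, he]; rfl
      · rw [he]; exact (pn_w6_iff c1 c2 c3 c4 c5 c6).mpr hcond⟩ :
      {w : List Bool // w.length = n ∧ w.count true = 6 ∧ IsPrefixNormal w}))
  constructor
  · rintro ⟨cs, hcs⟩ ⟨cs', hcs'⟩ h
    simp only [Subtype.mk.injEq] at h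
    obtain ⟨_,_,_,_,_,_, he, -, -⟩ := (mem_S hn).mp hcs
    obtain ⟨_,_,_,_,_,_, he', -, -⟩ := (mem_S hn).mp hcs'
    exact Subtype.ext (w6_injective (by simp [he, he']) h)
  · rintro ⟨w, hw1, hw2, hw3⟩
    obtain ⟨z, cs, rfl⟩ := w6_structure w
    have hlen6 : cs.length = 6 := by rw [← hw2, count_replicate_w6]
    have hz : z = 0 := by
      by_contra hz
      have htrue : true ∈ List.replicate z false ++ w6 cs := by
        have : 0 < (List.replicate z false ++ w6 cs).count true := by rw [hw2]; norm_num
        exact List.count_pos_iff.mp this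
      obtain ⟨s, t, hst⟩ := List.append_of_mem htrue
      have hinf : [true] <:+: List.replicate z false ++ w6 cs := ⟨s, t, by rw [hst]; simp⟩
      have := hw3 [true] hinf
      simp only [List.length_cons, List.length_nil] at this
      have hz1 : 1 ≤ z := Nat.one_le_iff_ne_zero.mpr hz
      have : (List.replicate z false ++ w6 cs).take 1 = [false] := by
        cases z with
        | zero => omega
        | succ z => rfl
      simp_all
    subst hz
    obtain ⟨c1,c2,c3,c4,c5,c6, rfl⟩ := list6 hlen6
    have hw3' : IsPrefixNormal (w6 [c1,c2,c3,c4,c5,c6]) := by simpa using hw3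
    have hcond := (pn_w6_iff c1 c2 c3 c4 c5 c6).mp hw3'
    have hsum : c1+c2+c3+c4+c5+c6 = n - 6 := by
      have h := hw1
      simp [w6_length] at h
      omega
    exact ⟨⟨_, (mem_S hn).mpr ⟨c1,c2,c3,c4,c5,c6, rfl, hsum, hcond⟩⟩, Subtype.ext (by simp)⟩

lemma dot_A (a u v s w t : ℕ) :
    dot [5,2,1,1,1,1] [a,u,v,s,w,t] = 5*a + 2*u + v + s + w + t := by
  simp [dot]; ring

lemma dot_B (a u s v w t : ℕ) :
    dot [5,3,2,1,1,1] [a,u,s,v,w,t] = 5*a + 3*u + 2*s + v + w + t := by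
  simp [dot]; ring

def splitq : List ℕ → Bool
  | [_,c2,_,c4,_,_] => decide (c2 ≤ c4)
  | _ => false

def mapA : List ℕ → List ℕ
  | [c1,c2,c3,c4,c5,t] => [c1, c2-c1, c3-c1, c4-c2, c5-c1, t]
  | _ => []

def mapA' : List ℕ → List ℕ
  | [a,u,v,s,w,t] => [a, a+u, a+v, a+u+s, a+w, t]
  | _ => []

def mapB : List ℕ → List ℕ
  | [c1,c2,c3,c4,c5,t] => [c1, c2-c4-1, c4-c1, c3-c1-(c2-c4), c5-c1-(c2-c4), t]
  | _ => []

def mapB' : List ℕ → List ℕ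
  | [a,u,s,v,w,t] => [a, a+s+1+u, a+1+u+v, a+s, a+1+u+w, t]
  | _ => []

lemma hposA : ∀ k ∈ [5,2,1,1,1,1], 0 < (k:ℕ) := by intro k hk; fin_cases hk <;> norm_num
lemma hposB : ∀ k ∈ [5,3,2,1,1,1], 0 < (k:ℕ) := by intro k hk; fin_cases hk <;> norm_num

lemma cardA {n : ℕ} (hn : 6 ≤ n) :
    ((S n).filter (fun cs => splitq cs = true)).card = (solS [5,2,1,1,1,1] (n-6)).card := by
  apply Finset.card_nbij' mapA mapA'
  · intro cs hcs
    rw [Finset.mem_coe, Finset.mem_filter] at hcs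
    obtain ⟨hcs, hq⟩ := hcs
    obtain ⟨c1,c2,c3,c4,c5,c6, rfl, hsum, hcond⟩ := (mem_S hn).mp hcs
    rw [Finset.mem_coe, mem_solS hposA]
    simp only [splitq, decide_eq_true_eq] at hq
    refine ⟨rfl, ?_⟩
    rw [mapA, dot_A]
    omega
  · intro v hv
    rw [Finset.mem_coe, mem_solS hposA] at hv
    obtain ⟨hlen, hdot⟩ := hv
    obtain ⟨a,u,vv,s,w,t, rfl⟩ := list6 hlen
    rw [dot_A] at hdot
    rw [Finset.mem_coe, Finset.mem_filter]
    constructor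
    · rw [mem_S hn]
      exact ⟨a, a+u, a+vv, a+u+s, a+w, t, rfl, by omega, by omega, by omega, by omega,
        by omega, by omega, by omega⟩
    · simp [mapA', splitq]
  · intro cs hcs
    rw [Finset.mem_coe, Finset.mem_filter] at hcs
    obtain ⟨hcs, hq⟩ := hcs
    obtain ⟨c1,c2,c3,c4,c5,c6, rfl, hsum, hcond⟩ := (mem_S hn).mp hcs
    simp only [splitq, decide_eq_true_eq] at hq
    simp only [mapA, mapA', List.cons.injEq, and_true, true_and]
    omega
  · intro v hv
    rw [Finset.mem_coe, mem_solS hposA] at hv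
    obtain ⟨hlen, hdot⟩ := hv
    obtain ⟨a,u,vv,s,w,t, rfl⟩ := list6 hlen
    simp only [mapA', mapA, List.cons.injEq, and_true, true_and]
    omega

lemma cardB {n : ℕ} (hn : 9 ≤ n) :
    ((S n).filter (fun cs => ¬ splitq cs = true)).card = (solS [5,3,2,1,1,1] (n-9)).card := by
  have hn6 : 6 ≤ n := by omega
  apply Finset.card_nbij' mapB mapB'
  · intro cs hcs
    rw [Finset.mem_coe, Finset.mem_filter] at hcs
    obtain ⟨hcs, hq⟩ := hcs
    obtain ⟨c1,c2,c3,c4,c5,c6, rfl, hsum, hcond⟩ := (mem_S hn6).mp hcs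
    rw [Finset.mem_coe, mem_solS hposB]
    simp only [splitq, decide_eq_true_eq] at hq
    refine ⟨rfl, ?_⟩
    rw [mapB, dot_B]
    omega
  · intro v hv
    rw [Finset.mem_coe, mem_solS hposB] at hv
    obtain ⟨hlen, hdot⟩ := hv
    obtain ⟨a,u,s,vv,w,t, rfl⟩ := list6 hlen
    rw [dot_B] at hdot
    rw [Finset.mem_coe, Finset.mem_filter]
    constructor
    · rw [mem_S hn6]
      exact ⟨a, a+s+1+u, a+1+u+vv, a+s, a+1+u+w, t, rfl, by omega, by omega, by omega,
        by omega, by omega, by omega, by omega⟩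
    · simp [mapB', splitq]; omega
  · intro cs hcs
    rw [Finset.mem_coe, Finset.mem_filter] at hcs
    obtain ⟨hcs, hq⟩ := hcs
    obtain ⟨c1,c2,c3,c4,c5,c6, rfl, hsum, hcond⟩ := (mem_S hn6).mp hcs
    simp only [splitq, decide_eq_true_eq] at hq
    simp only [mapB, mapB', List.cons.injEq, and_true, true_and]
    omega
  · intro v hv
    rw [Finset.mem_coe, mem_solS hposB] at hv
    obtain ⟨hlen, hdot⟩ := hv
    obtain ⟨a,u,s,vv,w,t, rfl⟩ := list6 hlen
    simp only [mapB', mapB, List.cons.injEq, and_true, true_and]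
    omega

lemma cardB_empty {n : ℕ} (hn6 : 6 ≤ n) (hn : n < 9) :
    ((S n).filter (fun cs => ¬ splitq cs = true)).card = 0 := by
  rw [Finset.card_eq_zero, Finset.eq_empty_iff_forall_notMem]
  intro cs hcs
  rw [Finset.mem_filter] at hcs
  obtain ⟨hcs, hq⟩ := hcs
  obtain ⟨c1,c2,c3,c4,c5,c6, rfl, hsum, hcond⟩ := (mem_S hn6).mp hcs
  simp only [splitq, decide_eq_true_eq] at hq
  omega

lemma S_card_split {n : ℕ} (hn : 6 ≤ n) :
    (S n).card = (solS [5,2,1,1,1,1] (n-6)).card +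
      (if 9 ≤ n then (solS [5,3,2,1,1,1] (n-9)).card else 0) := by
  classical
  rw [← Finset.card_filter_add_card_filter_not (s := S n)
    (p := fun cs => splitq cs = true), cardA hn]
  congr 1
  split_ifs with h9
  · exact cardB h9
  · exact cardB_empty hn (by omega)

lemma pnwd_small {n : ℕ} (hn : n < 6) : pnwd n 6 = 0 := by
  rw [pnwd]
  have : IsEmpty {w : List Bool // w.length = n ∧ w.count true = 6 ∧ IsPrefixNormal w} := by
    constructor
    rintro ⟨w, h1, h2, h3⟩
    have : w.count true ≤ w.length := List.count_le_length
    omega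
  exact Nat.card_of_isEmpty

/-! ### Assembly -/

lemma mk_pnwd_eq :
    PowerSeries.mk (fun n => if n = 0 then 0 else (pnwd n 6 : ℤ)) =
      X ^ 6 * Phi [5,2,1,1,1,1] + X ^ 9 * Phi [5,3,2,1,1,1] := by
  ext n
  rw [map_add, PowerSeries.coeff_X_pow_mul', PowerSeries.coeff_X_pow_mul']
  simp only [Phi, PowerSeries.coeff_mk, PowerSeries.coeff_mk]
  by_cases h6 : 6 ≤ n
  · rw [if_pos h6, if_neg (by omega : ¬ n = 0)]
    rw [pnwd_eq_S n h6, S_card_split h6]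
    split_ifs with h9
    · push_cast; ring
    · push_cast; ring
  · rw [if_neg h6, if_neg (by omega : ¬ 9 ≤ n)]
    by_cases h0 : n = 0
    · rw [if_pos h0]; ring
    · rw [if_neg h0, pnwd_small (by omega)]; norm_num

open PowerSeries in
theorem genFun_density_six :
    (1 - (X : PowerSeries ℤ) ^ 5) * (1 - X ^ 3) * (1 - X ^ 2) * (1 - X) ^ 3 *
      PowerSeries.mk (fun n => if n = 0 then 0 else (pnwd n 6 : ℤ)) =
      X ^ 6 * (1 + X + X ^ 2 + X ^ 3) := by
  rw [mk_pnwd_eq]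
  have one_pos : (0:ℕ) < 1 := by norm_num
  have pA1 : (1 - (X : PowerSeries ℤ)^5) * Phi [5,2,1,1,1,1] = Phi [2,1,1,1,1] :=
    peel (by decide) (by intro k hk; fin_cases hk <;> decide)
  have pA2 : (1 - (X : PowerSeries ℤ)^2) * Phi [2,1,1,1,1] = Phi [1,1,1,1] :=
    peel (by decide) (by intro k hk; fin_cases hk <;> decide)
  have pA3 : (1 - (X : PowerSeries ℤ)^1) * Phi [1,1,1,1] = Phi [1,1,1] :=
    peel (by decide) (by intro k hk; fin_cases hk <;> decide)
  have pA4 : (1 - (X : PowerSeries ℤ)^1) * Phi [1,1,1] = Phi [1,1] :=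
    peel (by decide) (by intro k hk; fin_cases hk <;> decide)
  have pA5 : (1 - (X : PowerSeries ℤ)^1) * Phi [1,1] = Phi [1] :=
    peel (by decide) (by intro k hk; fin_cases hk <;> decide)
  have pA6 : (1 - (X : PowerSeries ℤ)^1) * Phi [1] = Phi [] :=
    peel (by decide) (by intro k hk; fin_cases hk <;> decide)
  have pB1 : (1 - (X : PowerSeries ℤ)^5) * Phi [5,3,2,1,1,1] = Phi [3,2,1,1,1] :=
    peel (by decide) (by intro k hk; fin_cases hk <;> decide)
  have pB2 : (1 - (X : PowerSeries ℤ)^3) * Phi [3,2,1,1,1] = Phi [2,1,1,1] :=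
    peel (by decide) (by intro k hk; fin_cases hk <;> decide)
  have pB3 : (1 - (X : PowerSeries ℤ)^2) * Phi [2,1,1,1] = Phi [1,1,1] :=
    peel (by decide) (by intro k hk; fin_cases hk <;> decide)
  calc (1 - (X : PowerSeries ℤ) ^ 5) * (1 - X ^ 3) * (1 - X ^ 2) * (1 - X) ^ 3 *
      (X ^ 6 * Phi [5,2,1,1,1,1] + X ^ 9 * Phi [5,3,2,1,1,1])
      = X ^ 6 * ((1 + X + X^2) * ((1 - X^1) * ((1 - X^1) * ((1 - X^1) * ((1 - X^1) *
          ((1 - X^2) * ((1 - X^5) * Phi [5,2,1,1,1,1]))))))) +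
        X ^ 9 * ((1 - X^1) * ((1 - X^1) * ((1 - X^1) * ((1 - X^2) * ((1 - X^3) *
          ((1 - X^5) * Phi [5,3,2,1,1,1])))))) := by ring
    _ = X ^ 6 * (1 + X + X ^ 2 + X ^ 3) := by
        rw [pA1, pA2, pA3, pA4, pA5, pA6, pB1, pB2, pB3, pA4, pA5, pA6, Phi_nil]
        ring
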